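/- There exist equivalence relations E and F such that there are injective reductions from E to F and from F to E (E and F are bi-embeddable), but there is no reduction from E to F with F-invariant range. Explicitly, let E have ℵ₀ many classes of size ℵ₀ and one class of size 1, and let F have ℵ₀ many classes of size ℵ₀ and one class of size 2 (and no other classes). -/

import Mathlib

/-- A set with `ℵ₀` many classes of size `ℵ₀` (the `Sum.inr` part, grouped by first
coordinate) and one class of size 1 (the `Sum.inl` part). -/
def X16 : Type := Unit ⊕ (ℕ × ℕ)

/-- A set with `ℵ₀` many classes of size `ℵ₀` (the `Sum.inr` part, grouped by first
coordinate) and one class of size 2 (the `Sum.inl` part). -/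
def Y16 : Type := Fin 2 ⊕ (ℕ × ℕ)

def E16 : X16 → X16 → Prop
  | Sum.inl _, Sum.inl _ => True
  | Sum.inr p, Sum.inr q => p.1 = q.1
  | _, _ => False

def F16 : Y16 → Y16 → Prop
  | Sum.inl _, Sum.inl _ => True
  | Sum.inr p, Sum.inr q => p.1 = q.1
  | _, _ => False

theorem stmt16 :
    Equivalence E16 ∧ Equivalence F16 ∧
    (∃ φ : X16 → Y16, Function.Injective φ ∧ ∀ x x' : X16, E16 x x' ↔ F16 (φ x) (φ x')) ∧
    (∃ ψ : Y16 → X16, Function.Injective ψ ∧ ∀ y y' : Y16, F16 y y' ↔ E16 (ψ y) (ψ y')) ∧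
    ¬ ∃ φ : X16 → Y16, (∀ x x' : X16, E16 x x' ↔ F16 (φ x) (φ x')) ∧
        ∀ y y' : Y16, y ∈ Set.range φ → F16 y y' → y' ∈ Set.range φ := by
  refine ⟨⟨?_, ?_, ?_⟩, ⟨?_, ?_, ?_⟩, ?_, ?_, ?_⟩
  · rintro (u | p) <;> simp [E16]
  · rintro (u | p) (v | q) <;> simp [E16] <;> omega
  · rintro (u | p) (v | q) (w | r) <;> simp [E16] <;> omega
  · rintro (u | p) <;> simp [F16]
  · rintro (u | p) (v | q) <;> simp [F16] <;> omega
  · rintro (u | p) (v | q) (w | r) <;> simp [F16] <;> omega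
  · refine ⟨Sum.elim (fun _ => Sum.inl 0) (fun p => Sum.inr p), ?_, ?_⟩
    · rintro (u | p) (v | q) h
      · rfl
      · exact (Sum.inl_ne_inr (h : (Sum.inl 0 : Fin 2 ⊕ ℕ × ℕ) = Sum.inr q)).elim
      · exact (Sum.inr_ne_inl (h : (Sum.inr p : Fin 2 ⊕ ℕ × ℕ) = Sum.inl 0)).elim
      · injection h with h; exact congrArg Sum.inr h
    · rintro (u | p) (v | q) <;> exact Iff.rfl
  · refine ⟨Sum.elim (fun i => Sum.inr (0, (i : ℕ))) (fun p => Sum.inr (p.1 + 1, p.2)), ?_, ?_⟩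
    · rintro (u | p) (v | q) h
      · injection h with h; injection h with h1 h2
        exact congrArg Sum.inl (Fin.ext h2)
      · injection h with h; injection h with h1 h2; omega
      · injection h with h; injection h with h1 h2; omega
      · injection h with h; injection h with h1 h2
        exact congrArg Sum.inr (Prod.ext (by omega) h2)
    · rintro (u | p) (v | q)
      · exact ⟨fun _ => (rfl : (0:ℕ) = 0), fun _ => trivial⟩
      · exact ⟨False.elim, fun h => Nat.succ_ne_zero _ (h : (0:ℕ) = q.1 + 1).symm⟩
      · exact ⟨False.elim, fun h => Nat.succ_ne_zero _ (h : p.1 + 1 = (0:ℕ))⟩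
      · exact ⟨fun h => (show p.1 + 1 = q.1 + 1 by have h' : p.1 = q.1 := h; omega),
          fun h => (show p.1 = q.1 by have h' : p.1 + 1 = q.1 + 1 := h; omega)⟩
  · rintro ⟨φ, hred, hinv⟩
    have key : ∀ y' : Y16, F16 (φ (Sum.inl ())) y' → y' = φ (Sum.inl ()) := by
      intro y' hF
      obtain ⟨x, rfl⟩ := hinv _ y' ⟨Sum.inl (), rfl⟩ hF
      have hE : E16 (Sum.inl ()) x := (hred _ _).mpr hF
      rcases x with u | p
      · rfl
      · exact absurd hE (by simp [E16])
    rcases h : φ (Sum.inl ()) with i | p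
    · have h0 := key (Sum.inl 0) (by rw [h]; trivial)
      have h1 := key (Sum.inl 1) (by rw [h]; trivial)
      rw [h] at h0 h1
      have : (0 : Fin 2) = 1 := by
        exact (Sum.inl_injective (h0 : (Sum.inl 0 : Fin 2 ⊕ ℕ × ℕ) = Sum.inl i)).trans (Sum.inl_injective (h1 : (Sum.inl 1 : Fin 2 ⊕ ℕ × ℕ) = Sum.inl i)).symm
      simp at this
    · have h0 := key (Sum.inr (p.1, p.2)) (by rw [h]; show p.1 = p.1; rfl)
      have h1 := key (Sum.inr (p.1, p.2 + 1)) (by rw [h]; show p.1 = p.1; rfl)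
      rw [h] at h0 h1
      replace h0 := Sum.inr_injective (h0 : (Sum.inr (p.1, p.2) : Fin 2 ⊕ ℕ × ℕ) = Sum.inr p)
      replace h1 := Sum.inr_injective (h1 : (Sum.inr (p.1, p.2 + 1) : Fin 2 ⊕ ℕ × ℕ) = Sum.inr p)
      have := h0.trans h1.symm
      simp [Prod.ext_iff] at this
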